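/- arXiv:1004.2639 — 2 statements merged into one kernel-verified Lean document; each statement's English description precedes it below -/
import Mathlib

section
/- Let M be an identically self-dual matroid on a finite ground set E, i.e. M = M*, where M* is the dual matroid of M. Then for every real number a ≥ 2, max{T_M(2a, 0), T_M(0, 2a)} ≥ T_M(a, a), where T_M denotes the Tutte polynomial of M. -/
open Matroid Set

variable {α : Type*}

/-- The rank of a set `X` in a matroid `M`:
the maximum size of an independent subset of `X`. -/
noncomputable def Matroid.rankSet (M : Matroid α) (X : Set α) : ℕ :=
  sSup {n | ∃ I ⊆ X, M.Indep I ∧ I.ncard = n}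

/-- The Tutte polynomial of a matroid `M` on a finite type, evaluated at `(x, y) : ℝ × ℝ`:
`T_M(x,y) = Σ_{A ⊆ E} (x−1)^{r(E)−r(A)} · (y−1)^{|A|−r(A)}`. -/
noncomputable def Matroid.tutte [Fintype α] (M : Matroid α) (x y : ℝ) : ℝ :=
  ∑ A ∈ M.E.toFinite.toFinset.powerset,
    (x - 1) ^ (M.rankSet M.E - M.rankSet ↑A) * (y - 1) ^ (A.card - M.rankSet ↑A)

section RankSetLemmas

variable [Fintype α] (M : Matroid α)

lemma rankSet_bddAbove (X : Set α) : BddAbove {n | ∃ I ⊆ X, M.Indep I ∧ I.ncard = n} := by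
  refine ⟨Fintype.card α, fun n hn => ?_⟩
  obtain ⟨I, _, _, rfl⟩ := hn
  calc I.ncard ≤ (Set.univ : Set α).ncard := Set.ncard_le_ncard (Set.subset_univ I) (Set.toFinite _)
    _ = Fintype.card α := by rw [Set.ncard_univ, Nat.card_eq_fintype_card]

lemma rankSet_witness (X : Set α) :
    ∃ I ⊆ X, M.Indep I ∧ I.ncard = M.rankSet X := by
  have hne : {n | ∃ I ⊆ X, M.Indep I ∧ I.ncard = n}.Nonempty :=
    ⟨0, ∅, Set.empty_subset X, M.empty_indep, Set.ncard_empty α⟩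
  have := Nat.sSup_mem hne (rankSet_bddAbove M X)
  exact this

lemma le_rankSet {I X : Set α} (hIX : I ⊆ X) (hI : M.Indep I) :
    I.ncard ≤ M.rankSet X :=
  le_csSup (rankSet_bddAbove M X) ⟨I, hIX, hI, rfl⟩

lemma rankSet_mono {X Y : Set α} (h : X ⊆ Y) : M.rankSet X ≤ M.rankSet Y := by
  obtain ⟨I, hIX, hI, hcard⟩ := rankSet_witness M X
  rw [← hcard]
  exact le_rankSet M (hIX.trans h) hI

lemma rankSet_le_ncard (X : Set α) : M.rankSet X ≤ X.ncard := by
  obtain ⟨I, hIX, _, hcard⟩ := rankSet_witness M X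
  rw [← hcard]
  exact Set.ncard_le_ncard hIX (Set.toFinite _)

lemma rankSet_empty : M.rankSet ∅ = 0 :=
  Nat.le_zero.mp ((rankSet_le_ncard M ∅).trans (by simp))

lemma Matroid.Indep.rankSet_eq {I : Set α} (hI : M.Indep I) : M.rankSet I = I.ncard :=
  le_antisymm (rankSet_le_ncard M I) (le_rankSet M subset_rfl hI)

lemma rankSet_insert_le (X : Set α) (g : α) :
    M.rankSet (insert g X) ≤ M.rankSet X + 1 := by
  obtain ⟨I, hIX, hI, hcard⟩ := rankSet_witness M (insert g X)
  rw [← hcard]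
  have h1 : I \ {g} ⊆ X := by
    intro x hx
    rcases hIX hx.1 with h | h
    · exact absurd h hx.2
    · exact h
  have h2 : M.Indep (I \ {g}) := hI.subset diff_subset
  have h3 : I.ncard ≤ (I \ {g}).ncard + 1 := by
    by_cases hg : g ∈ I
    · rw [Set.ncard_diff_singleton_of_mem hg]
      have : 1 ≤ I.ncard := by
        rw [Nat.one_le_iff_ne_zero, Ne, Set.ncard_eq_zero (Set.toFinite _)]
        intro h; rw [h] at hg; exact hg
      omega
    · rw [Set.diff_singleton_eq_self hg]; omega
  exact h3.trans (by have := le_rankSet M h1 h2; omega)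

lemma ncard_le_of_indep_basis {I J X : Set α} (hI : M.Indep I) (hIX : I ⊆ X)
    (hJ : M.IsBasis J X) : I.ncard ≤ J.ncard := by
  by_contra hlt
  push_neg at hlt
  have haug : J.encard < I.encard := by
    rw [Set.Finite.encard_eq_coe_toFinset_card (Set.toFinite J),
        Set.Finite.encard_eq_coe_toFinset_card (Set.toFinite I),
        Set.ncard_eq_toFinset_card J (Set.toFinite J),
        Set.ncard_eq_toFinset_card I (Set.toFinite I)] at *
    exact_mod_cast hlt
  obtain ⟨e, he, hei⟩ := hJ.indep.augment hI haug
  have : insert e J ⊆ X := insert_subset (hIX he.1) hJ.subset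
  have heq := hJ.eq_of_subset_indep hei (subset_insert e J) this
  exact he.2 (heq ▸ mem_insert e J)

lemma rankSet_eq_of_basis {J X : Set α} (hJ : M.IsBasis J X) : M.rankSet X = J.ncard := by
  refine le_antisymm ?_ (le_rankSet M hJ.subset hJ.indep)
  obtain ⟨I, hIX, hI, hcard⟩ := rankSet_witness M X
  rw [← hcard]
  exact ncard_le_of_indep_basis M hI hIX hJ

lemma rankSet_submod {X Y : Set α} (hX : X ⊆ M.E) (hY : Y ⊆ M.E) :
    M.rankSet (X ∪ Y) + M.rankSet (X ∩ Y) ≤ M.rankSet X + M.rankSet Y := by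
  obtain ⟨I, hI⟩ := M.exists_isBasis (X ∩ Y) ((Set.inter_subset_left).trans hX)
  obtain ⟨J, hJ, hIJ⟩ := hI.indep.subset_isBasis_of_subset
    (hI.subset.trans ((Set.inter_subset_left).trans Set.subset_union_left)) (Set.union_subset hX hY)
  have hrXY : M.rankSet (X ∪ Y) = J.ncard := rankSet_eq_of_basis M hJ
  have hrI : M.rankSet (X ∩ Y) = I.ncard := rankSet_eq_of_basis M hI
  have h1 : (J ∩ X).ncard + (J ∩ Y).ncard = ((J ∩ X) ∪ (J ∩ Y)).ncard + ((J ∩ X) ∩ (J ∩ Y)).ncard := by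
    rw [Set.ncard_union_add_ncard_inter _ _ (Set.toFinite _) (Set.toFinite _)]
  have h2 : (J ∩ X) ∪ (J ∩ Y) = J := by
    rw [← Set.inter_union_distrib_left]
    exact Set.inter_eq_self_of_subset_left hJ.subset
  have h3 : I ⊆ (J ∩ X) ∩ (J ∩ Y) := by
    intro x hx
    have hxJ := hIJ hx
    have hxXY := hI.subset hx
    exact ⟨⟨hxJ, hxXY.1⟩, hxJ, hxXY.2⟩
  have h4 : I.ncard ≤ ((J ∩ X) ∩ (J ∩ Y)).ncard := Set.ncard_le_ncard h3 (Set.toFinite _)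
  have h5 : (J ∩ X).ncard ≤ M.rankSet X := le_rankSet M Set.inter_subset_right (hJ.indep.subset Set.inter_subset_left)
  have h6 : (J ∩ Y).ncard ≤ M.rankSet Y := le_rankSet M Set.inter_subset_right (hJ.indep.subset Set.inter_subset_left)
  rw [hrXY, hrI]
  rw [h2] at h1
  omega

end RankSetLemmas

section Abstract

variable {β : Type*} [DecidableEq β]

/-- Axioms for a normalized, monotone, unit-step, submodular rank function on subsets of `G`. -/
structure RhoAx (G : Finset β) (ρ : Finset β → ℕ) : Prop where
  empty : ρ ∅ = 0
  mono : ∀ ⦃A B : Finset β⦄, A ⊆ B → B ⊆ G → ρ A ≤ ρ B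
  step : ∀ ⦃A : Finset β⦄ ⦃g : β⦄, A ⊆ G → g ∈ G → ρ (insert g A) ≤ ρ A + 1
  submod : ∀ ⦃A B : Finset β⦄, A ⊆ G → B ⊆ G → ρ (A ∪ B) + ρ (A ∩ B) ≤ ρ A + ρ B

namespace RhoAx

variable {G : Finset β} {ρ : Finset β → ℕ}

lemma le_card (h : RhoAx G ρ) : ∀ {A : Finset β}, A ⊆ G → ρ A ≤ A.card := by
  intro A
  induction A using Finset.induction_on with
  | empty => intro _; simp [h.empty]
  | @insert g A hg ih =>
    intro hsub
    have h1 : A ⊆ G := (Finset.subset_insert g A).trans hsub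
    have := h.step h1 (hsub (Finset.mem_insert_self g A))
    have := ih h1
    rw [Finset.card_insert_of_notMem hg]
    omega

lemma subset_ax (h : RhoAx G ρ) {G' : Finset β} (hG' : G' ⊆ G) : RhoAx G' ρ where
  empty := h.empty
  mono _ _ hAB hB := h.mono hAB (hB.trans hG')
  step _ _ hA hg := h.step (hA.trans hG') (hG' hg)
  submod _ _ hA hB := h.submod (hA.trans hG') (hB.trans hG')

/-- contraction of a non-loop element -/
lemma contract_ax (h : RhoAx G ρ) {g : β} (hg : g ∈ G) (hg1 : ρ {g} = 1) :
    RhoAx (G.erase g) (fun W => ρ (insert g W) - 1) where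
  empty := by simp [hg1]
  mono := by
    intro A B hAB hB
    show ρ (insert g A) - 1 ≤ ρ (insert g B) - 1
    exact Nat.sub_le_sub_right
      (h.mono (Finset.insert_subset_insert g hAB)
        (Finset.insert_subset hg ((hB.trans (Finset.erase_subset g G))))) 1
  step := by
    intro A g' hA hg'
    have h1 : insert g (insert g' A) = insert g' (insert g A) := Finset.insert_comm g g' A
    show ρ (insert g (insert g' A)) - 1 ≤ ρ (insert g A) - 1 + 1
    rw [h1]
    have h2 : insert g A ⊆ G := Finset.insert_subset hg (hA.trans (Finset.erase_subset g G))
    have h3 := h.step h2 ((Finset.erase_subset g G) hg')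
    have h4 : 1 ≤ ρ (insert g A) := by
      have hs : ({g} : Finset β) ⊆ insert g A := by simp
      have := h.mono hs h2
      omega
    omega
  submod := by
    intro A B hA hB
    have hA' : insert g A ⊆ G := Finset.insert_subset hg (hA.trans (Finset.erase_subset g G))
    have hB' : insert g B ⊆ G := Finset.insert_subset hg (hB.trans (Finset.erase_subset g G))
    have h1 : insert g A ∪ insert g B = insert g (A ∪ B) := by
      ext x; simp only [Finset.mem_insert, Finset.mem_union]; tauto
    have h2 : insert g A ∩ insert g B = insert g (A ∩ B) := by
      ext x; simp only [Finset.mem_insert, Finset.mem_inter]; tauto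
    have h3 := h.submod hA' hB'
    rw [h1, h2] at h3
    show ρ (insert g (A ∪ B)) - 1 + (ρ (insert g (A ∩ B)) - 1) ≤ ρ (insert g A) - 1 + (ρ (insert g B) - 1)
    have h4 : 1 ≤ ρ (insert g (A ∪ B)) := by
      have hs : ({g} : Finset β) ⊆ insert g (A ∪ B) := by simp
      have hsub : insert g (A ∪ B) ⊆ G := by
        refine Finset.insert_subset hg ?_
        exact (Finset.union_subset hA hB).trans (Finset.erase_subset g G)
      have := h.mono hs hsub
      omega
    have h5 : 1 ≤ ρ (insert g (A ∩ B)) := by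
      have hs : ({g} : Finset β) ⊆ insert g (A ∩ B) := by simp
      have hsub : insert g (A ∩ B) ⊆ G := by
        refine Finset.insert_subset hg ?_
        exact (Finset.inter_subset_left.trans hA).trans (Finset.erase_subset g G)
      have := h.mono hs hsub
      omega
    omega

end RhoAx

end Abstract

section MainInduction

variable {β : Type*} [DecidableEq β]

lemma sum_pow_diag_le (c : ℝ) (hc : 1 ≤ c) (G : Finset β) :
    ∀ (ρ : Finset β → ℕ), RhoAx G ρ →
      ∑ Z ∈ G.powerset, c ^ ((ρ G - ρ Z) + (Z.card - ρ Z)) ≤ (1 + c) ^ G.card := by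
  have hc0 : (0:ℝ) < c := lt_of_lt_of_le one_pos hc
  induction G using Finset.strongInduction with
  | _ G ih =>
    intro ρ hρ
    rcases G.eq_empty_or_nonempty with rfl | ⟨g, hg⟩
    · simp [hρ.empty]
    · set G' := G.erase g with hG'def
      have hGi : insert g G' = G := Finset.insert_erase hg
      have hgG' : g ∉ G' := Finset.notMem_erase g G
      have hss : G' ⊂ G := Finset.erase_ssubset hg
      have hsub : G' ⊆ G := Finset.erase_subset g G
      have hcard : G.card = G'.card + 1 := by
        rw [← hGi, Finset.card_insert_of_notMem hgG']
      have hsplit : ∑ Z ∈ G.powerset, c ^ ((ρ G - ρ Z) + (Z.card - ρ Z))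
          = ∑ Z ∈ G'.powerset, c ^ ((ρ G - ρ Z) + (Z.card - ρ Z))
            + ∑ Z ∈ G'.powerset, c ^ ((ρ G - ρ (insert g Z)) + ((insert g Z).card - ρ (insert g Z))) := by
        rw [← hGi, Finset.sum_powerset_insert hgG']
      have hstepG : ρ G ≤ ρ G' + 1 := by
        rw [← hGi]; exact hρ.step hsub hg
      have hmonoG : ρ G' ≤ ρ G := hρ.mono hsub Finset.Subset.rfl
      by_cases hloop : ρ {g} = 0
      · -- loop case
        have hkey : ∀ Z : Finset β, Z ⊆ G' → ρ (insert g Z) = ρ Z := by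
          intro Z hZ
          have hZG : Z ⊆ G := hZ.trans hsub
          have h1 := hρ.submod (Finset.singleton_subset_iff.mpr hg) hZG
          have h2 : {g} ∪ Z = insert g Z := by rw [Finset.insert_eq]
          have h3 : {g} ∩ Z = ∅ := Finset.singleton_inter_of_notMem (fun h => hgG' (hZ h))
          rw [h2, h3, hρ.empty, hloop] at h1
          exact le_antisymm (by omega) (hρ.mono (Finset.subset_insert g Z)
            (Finset.insert_subset hg hZG))
        have hGG' : ρ G = ρ G' := by rw [← hGi, hkey G' Finset.Subset.rfl]
        rw [hsplit]
        have he1 : ∀ Z ∈ G'.powerset, c ^ ((ρ G - ρ (insert g Z)) + ((insert g Z).card - ρ (insert g Z)))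
            = c * c ^ ((ρ G - ρ Z) + (Z.card - ρ Z)) := by
          intro Z hZ
          rw [Finset.mem_powerset] at hZ
          have h4 := hkey Z hZ
          have h5 : (insert g Z).card = Z.card + 1 :=
            Finset.card_insert_of_notMem (fun h => hgG' (hZ h))
          have h6 : ρ Z ≤ Z.card := hρ.le_card (hZ.trans hsub)
          rw [h4, h5, ← pow_succ']
          congr 1
          omega
        rw [Finset.sum_congr rfl he1, ← Finset.mul_sum]
        have hIH := ih G' hss ρ (hρ.subset_ax hsub)
        rw [hGG'] at *
        have hb : (0:ℝ) ≤ 1 + c := by linarith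
        calc ∑ Z ∈ G'.powerset, c ^ ((ρ G' - ρ Z) + (Z.card - ρ Z))
              + c * ∑ Z ∈ G'.powerset, c ^ ((ρ G' - ρ Z) + (Z.card - ρ Z))
            = (1 + c) * ∑ Z ∈ G'.powerset, c ^ ((ρ G' - ρ Z) + (Z.card - ρ Z)) := by ring
          _ ≤ (1 + c) * (1 + c) ^ G'.card := by
              apply mul_le_mul_of_nonneg_left hIH hb
          _ = (1 + c) ^ G.card := by rw [hcard, pow_succ']
      · have hg1 : ρ {g} = 1 := by
          have h1 : ρ {g} ≤ 1 := by
            have := hρ.le_card (Finset.singleton_subset_iff.mpr hg)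
            simpa using this
          omega
        by_cases hcol : ρ G' = ρ G
        · -- regular case
          rw [hsplit]
          have hIH1 := ih G' hss ρ (hρ.subset_ax hsub)
          have hax2 := hρ.contract_ax hg hg1
          have hIH2 := ih G' hss (fun W => ρ (insert g W) - 1) hax2
          have he1 : ∀ Z ∈ G'.powerset, c ^ ((ρ G - ρ Z) + (Z.card - ρ Z))
              = c ^ ((ρ G' - ρ Z) + (Z.card - ρ Z)) := by
            intro Z hZ; rw [hcol]
          have hrg1 : ∀ Z : Finset β, Z ⊆ G' → ρ (insert g Z) = (ρ (insert g Z) - 1) + 1 := by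
            intro Z hZ
            have : ({g} : Finset β) ⊆ insert g Z := by simp
            have h2 : insert g Z ⊆ G := by
              rw [← hGi]; exact Finset.insert_subset_insert g hZ
            have := hρ.mono this h2
            omega
          have he2 : ∀ Z ∈ G'.powerset, c ^ ((ρ G - ρ (insert g Z)) + ((insert g Z).card - ρ (insert g Z)))
              = c ^ (((fun W => ρ (insert g W) - 1) G' - (fun W => ρ (insert g W) - 1) Z)
                  + (Z.card - (fun W => ρ (insert g W) - 1) Z)) := by
            intro Z hZ
            rw [Finset.mem_powerset] at hZ
            have h4 := hrg1 Z hZ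
            have h5 : (insert g Z).card = Z.card + 1 :=
              Finset.card_insert_of_notMem (fun h => hgG' (hZ h))
            have h6 : ρ (insert g Z) ≤ Z.card + 1 := by
              have h7 : insert g Z ⊆ G := by rw [← hGi]; exact Finset.insert_subset_insert g hZ
              have := hρ.le_card h7
              omega
            have h8 : ρ (insert g G') = ρ G := by rw [hGi]
            have h9 : ρ (insert g Z) ≤ ρ (insert g G') := by
              apply hρ.mono (Finset.insert_subset_insert g hZ)
              rw [hGi]
            have h10 : 1 ≤ ρ G := by
              have : ({g} : Finset β) ⊆ G := Finset.singleton_subset_iff.mpr hg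
              have := hρ.mono this Finset.Subset.rfl
              omega
            simp only []
            congr 1
            rw [h5, h8]
            omega
          rw [Finset.sum_congr rfl he1, Finset.sum_congr rfl he2]
          calc _ ≤ (1 + c) ^ G'.card + (1 + c) ^ G'.card := add_le_add hIH1 hIH2
            _ = 2 * (1 + c) ^ G'.card := by ring
            _ ≤ (1 + c) * (1 + c) ^ G'.card := by
                apply mul_le_mul_of_nonneg_right (by linarith) (by positivity)
            _ = (1 + c) ^ G.card := by rw [hcard, pow_succ']
        · -- coloop case
          have hcol' : ρ G = ρ G' + 1 := by omega
          have hkey : ∀ Z : Finset β, Z ⊆ G' → ρ (insert g Z) = ρ Z + 1 := by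
            intro Z hZ
            have h2 : insert g Z ⊆ G := by rw [← hGi]; exact Finset.insert_subset_insert g hZ
            have h1 := hρ.submod h2 hsub
            have h3 : insert g Z ∪ G' = G := by
              rw [← hGi]
              ext x; simp only [Finset.mem_union, Finset.mem_insert]
              constructor
              · rintro (⟨rfl | hx⟩ | hx)
                · exact Or.inl rfl
                · exact Or.inr (hZ hx)
                · exact Or.inr hx
              · rintro (rfl | hx)
                · exact Or.inl (Or.inl rfl)
                · exact Or.inr hx
            have h4 : insert g Z ∩ G' = Z := by
              ext x; simp only [Finset.mem_inter, Finset.mem_insert]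
              constructor
              · rintro ⟨rfl | hx, hxG'⟩
                · exact absurd hxG' hgG'
                · exact hx
              · intro hx; exact ⟨Or.inr hx, hZ hx⟩
            rw [h3, h4] at h1
            have h5 := hρ.step (hZ.trans hsub) hg
            omega
          rw [hsplit]
          have hIH := ih G' hss ρ (hρ.subset_ax hsub)
          have he1 : ∀ Z ∈ G'.powerset, c ^ ((ρ G - ρ Z) + (Z.card - ρ Z))
              = c * c ^ ((ρ G' - ρ Z) + (Z.card - ρ Z)) := by
            intro Z hZ
            rw [Finset.mem_powerset] at hZ
            have h6 : ρ Z ≤ ρ G' := hρ.mono hZ hsub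
            rw [← pow_succ']
            congr 1
            omega
          have he2 : ∀ Z ∈ G'.powerset, c ^ ((ρ G - ρ (insert g Z)) + ((insert g Z).card - ρ (insert g Z)))
              = c ^ ((ρ G' - ρ Z) + (Z.card - ρ Z)) := by
            intro Z hZ
            rw [Finset.mem_powerset] at hZ
            have h4 := hkey Z hZ
            have h5 : (insert g Z).card = Z.card + 1 :=
              Finset.card_insert_of_notMem (fun h => hgG' (hZ h))
            congr 1
            rw [h4, h5]
            omega
          rw [Finset.sum_congr rfl he1, Finset.sum_congr rfl he2, ← Finset.mul_sum]
          calc c * ∑ Z ∈ G'.powerset, c ^ ((ρ G' - ρ Z) + (Z.card - ρ Z))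
                + ∑ Z ∈ G'.powerset, c ^ ((ρ G' - ρ Z) + (Z.card - ρ Z))
              = (1 + c) * ∑ Z ∈ G'.powerset, c ^ ((ρ G' - ρ Z) + (Z.card - ρ Z)) := by ring
            _ ≤ (1 + c) * (1 + c) ^ G'.card := mul_le_mul_of_nonneg_left hIH (by linarith)
            _ = (1 + c) ^ G.card := by rw [hcard, pow_succ']

end MainInduction

section SignedInduction

variable {β : Type*} [DecidableEq β]

lemma sum_x0_nonneg (x : ℝ) (hx : 1 ≤ x) (G : Finset β) :
    ∀ (ρ : Finset β → ℕ), RhoAx G ρ →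
      0 ≤ ∑ Z ∈ G.powerset, (x - 1) ^ (ρ G - ρ Z) * (-1 : ℝ) ^ (Z.card - ρ Z) := by
  have hx0 : (0:ℝ) ≤ x - 1 := by linarith
  induction G using Finset.strongInduction with
  | _ G ih =>
    intro ρ hρ
    rcases G.eq_empty_or_nonempty with rfl | ⟨g, hg⟩
    · simp [hρ.empty]
    · set G' := G.erase g with hG'def
      have hGi : insert g G' = G := Finset.insert_erase hg
      have hgG' : g ∉ G' := Finset.notMem_erase g G
      have hss : G' ⊂ G := Finset.erase_ssubset hg
      have hsub : G' ⊆ G := Finset.erase_subset g G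
      have hsplit : ∑ Z ∈ G.powerset, (x - 1) ^ (ρ G - ρ Z) * (-1 : ℝ) ^ (Z.card - ρ Z)
          = ∑ Z ∈ G'.powerset, (x - 1) ^ (ρ G - ρ Z) * (-1 : ℝ) ^ (Z.card - ρ Z)
            + ∑ Z ∈ G'.powerset, (x - 1) ^ (ρ G - ρ (insert g Z)) * (-1 : ℝ) ^ ((insert g Z).card - ρ (insert g Z)) := by
        rw [← hGi, Finset.sum_powerset_insert hgG']
      have hstepG : ρ G ≤ ρ G' + 1 := by rw [← hGi]; exact hρ.step hsub hg
      have hmonoG : ρ G' ≤ ρ G := hρ.mono hsub Finset.Subset.rfl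
      by_cases hloop : ρ {g} = 0
      · -- loop: total is zero
        have hkey : ∀ Z : Finset β, Z ⊆ G' → ρ (insert g Z) = ρ Z := by
          intro Z hZ
          have hZG : Z ⊆ G := hZ.trans hsub
          have h1 := hρ.submod (Finset.singleton_subset_iff.mpr hg) hZG
          have h2 : {g} ∪ Z = insert g Z := by rw [Finset.insert_eq]
          have h3 : {g} ∩ Z = ∅ := Finset.singleton_inter_of_notMem (fun h => hgG' (hZ h))
          rw [h2, h3, hρ.empty, hloop] at h1
          exact le_antisymm (by omega) (hρ.mono (Finset.subset_insert g Z)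
            (Finset.insert_subset hg hZG))
        have he1 : ∀ Z ∈ G'.powerset,
            (x - 1) ^ (ρ G - ρ (insert g Z)) * (-1 : ℝ) ^ ((insert g Z).card - ρ (insert g Z))
            = -((x - 1) ^ (ρ G - ρ Z) * (-1 : ℝ) ^ (Z.card - ρ Z)) := by
          intro Z hZ
          rw [Finset.mem_powerset] at hZ
          have h4 := hkey Z hZ
          have h5 : (insert g Z).card = Z.card + 1 :=
            Finset.card_insert_of_notMem (fun h => hgG' (hZ h))
          have h6 : ρ Z ≤ Z.card := hρ.le_card (hZ.trans hsub)
          have h7 : (insert g Z).card - ρ (insert g Z) = (Z.card - ρ Z) + 1 := by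
            rw [h4, h5]; omega
          rw [h7, h4, pow_succ]
          ring
        rw [hsplit, Finset.sum_congr rfl he1, Finset.sum_neg_distrib]
        simp
      · have hg1 : ρ {g} = 1 := by
          have h1 : ρ {g} ≤ 1 := by
            have := hρ.le_card (Finset.singleton_subset_iff.mpr hg)
            simpa using this
          omega
        by_cases hcol : ρ G' = ρ G
        · -- regular case
          rw [hsplit]
          have hIH1 := ih G' hss ρ (hρ.subset_ax hsub)
          have hax2 := hρ.contract_ax hg hg1
          have hIH2 := ih G' hss (fun W => ρ (insert g W) - 1) hax2
          have he1 : ∀ Z ∈ G'.powerset, (x - 1) ^ (ρ G - ρ Z) * (-1 : ℝ) ^ (Z.card - ρ Z)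
              = (x - 1) ^ (ρ G' - ρ Z) * (-1 : ℝ) ^ (Z.card - ρ Z) := by
            intro Z hZ; rw [hcol]
          have he2 : ∀ Z ∈ G'.powerset,
              (x - 1) ^ (ρ G - ρ (insert g Z)) * (-1 : ℝ) ^ ((insert g Z).card - ρ (insert g Z))
              = (x - 1) ^ ((fun W => ρ (insert g W) - 1) G' - (fun W => ρ (insert g W) - 1) Z)
                * (-1 : ℝ) ^ (Z.card - (fun W => ρ (insert g W) - 1) Z) := by
            intro Z hZ
            rw [Finset.mem_powerset] at hZ
            have h2 : insert g Z ⊆ G := by rw [← hGi]; exact Finset.insert_subset_insert g hZ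
            have h4 : 1 ≤ ρ (insert g Z) := by
              have hs : ({g} : Finset β) ⊆ insert g Z := by simp
              have := hρ.mono hs h2
              omega
            have h5 : (insert g Z).card = Z.card + 1 :=
              Finset.card_insert_of_notMem (fun h => hgG' (hZ h))
            have h6 : ρ (insert g Z) ≤ Z.card + 1 := by
              have := hρ.le_card h2; omega
            have h8 : ρ (insert g G') = ρ G := by rw [hGi]
            have h9 : ρ (insert g Z) ≤ ρ (insert g G') := by
              apply hρ.mono (Finset.insert_subset_insert g hZ)
              rw [hGi]
            simp only []
            rw [h5, h8]
            congr 2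
            · omega
            · omega
          rw [Finset.sum_congr rfl he1, Finset.sum_congr rfl he2]
          exact add_nonneg hIH1 hIH2
        · -- coloop case
          have hcol' : ρ G = ρ G' + 1 := by omega
          have hkey : ∀ Z : Finset β, Z ⊆ G' → ρ (insert g Z) = ρ Z + 1 := by
            intro Z hZ
            have h2 : insert g Z ⊆ G := by rw [← hGi]; exact Finset.insert_subset_insert g hZ
            have h1 := hρ.submod h2 hsub
            have h3 : insert g Z ∪ G' = G := by
              rw [← hGi]
              ext y; simp only [Finset.mem_union, Finset.mem_insert]
              constructor
              · rintro (⟨rfl | hy⟩ | hy)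
                · exact Or.inl rfl
                · exact Or.inr (hZ hy)
                · exact Or.inr hy
              · rintro (rfl | hy)
                · exact Or.inl (Or.inl rfl)
                · exact Or.inr hy
            have h4 : insert g Z ∩ G' = Z := by
              ext y; simp only [Finset.mem_inter, Finset.mem_insert]
              constructor
              · rintro ⟨rfl | hy, hyG'⟩
                · exact absurd hyG' hgG'
                · exact hy
              · intro hy; exact ⟨Or.inr hy, hZ hy⟩
            rw [h3, h4] at h1
            have h5 := hρ.step (hZ.trans hsub) hg
            omega
          rw [hsplit]
          have hIH := ih G' hss ρ (hρ.subset_ax hsub)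
          have he1 : ∀ Z ∈ G'.powerset, (x - 1) ^ (ρ G - ρ Z) * (-1 : ℝ) ^ (Z.card - ρ Z)
              = (x - 1) * ((x - 1) ^ (ρ G' - ρ Z) * (-1 : ℝ) ^ (Z.card - ρ Z)) := by
            intro Z hZ
            rw [Finset.mem_powerset] at hZ
            have h6 : ρ Z ≤ ρ G' := hρ.mono hZ hsub
            have h7 : ρ G - ρ Z = (ρ G' - ρ Z) + 1 := by omega
            rw [h7, pow_succ]
            ring
          have he2 : ∀ Z ∈ G'.powerset,
              (x - 1) ^ (ρ G - ρ (insert g Z)) * (-1 : ℝ) ^ ((insert g Z).card - ρ (insert g Z))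
              = (x - 1) ^ (ρ G' - ρ Z) * (-1 : ℝ) ^ (Z.card - ρ Z) := by
            intro Z hZ
            rw [Finset.mem_powerset] at hZ
            have h4 := hkey Z hZ
            have h5 : (insert g Z).card = Z.card + 1 :=
              Finset.card_insert_of_notMem (fun h => hgG' (hZ h))
            congr 2
            · omega
            · rw [h4, h5]; omega
          rw [Finset.sum_congr rfl he1, Finset.sum_congr rfl he2, ← Finset.mul_sum]
          have := mul_nonneg hx0 hIH
          linarith
end SignedInduction

section SignedGE

variable {β : Type*} [DecidableEq β]

lemma sum_x0_ge (x : ℝ) (hx : 1 ≤ x) (G : Finset β) :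
    ∀ (ρ : Finset β → ℕ), RhoAx G ρ → (∀ g ∈ G, ρ {g} = 1) →
      x ^ ρ G ≤ ∑ Z ∈ G.powerset, (x - 1) ^ (ρ G - ρ Z) * (-1 : ℝ) ^ (Z.card - ρ Z) := by
  have hx0 : (0:ℝ) ≤ x - 1 := by linarith
  have hx1 : (0:ℝ) ≤ x := by linarith
  induction G using Finset.strongInduction with
  | _ G ih =>
    intro ρ hρ hll
    rcases G.eq_empty_or_nonempty with rfl | ⟨g, hg⟩
    · simp [hρ.empty]
    · set G' := G.erase g with hG'def
      have hGi : insert g G' = G := Finset.insert_erase hg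
      have hgG' : g ∉ G' := Finset.notMem_erase g G
      have hss : G' ⊂ G := Finset.erase_ssubset hg
      have hsub : G' ⊆ G := Finset.erase_subset g G
      have hsplit : ∑ Z ∈ G.powerset, (x - 1) ^ (ρ G - ρ Z) * (-1 : ℝ) ^ (Z.card - ρ Z)
          = ∑ Z ∈ G'.powerset, (x - 1) ^ (ρ G - ρ Z) * (-1 : ℝ) ^ (Z.card - ρ Z)
            + ∑ Z ∈ G'.powerset, (x - 1) ^ (ρ G - ρ (insert g Z)) * (-1 : ℝ) ^ ((insert g Z).card - ρ (insert g Z)) := by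
        rw [← hGi, Finset.sum_powerset_insert hgG']
      have hstepG : ρ G ≤ ρ G' + 1 := by rw [← hGi]; exact hρ.step hsub hg
      have hmonoG : ρ G' ≤ ρ G := hρ.mono hsub Finset.Subset.rfl
      have hg1 : ρ {g} = 1 := hll g hg
      have hll' : ∀ h ∈ G', ρ {h} = 1 := fun h hh => hll h (hsub hh)
      by_cases hcol : ρ G' = ρ G
      · -- regular case
        rw [hsplit]
        have hIH1 := ih G' hss ρ (hρ.subset_ax hsub) hll'
        have hax2 := hρ.contract_ax hg hg1
        have hIH2 := sum_x0_nonneg x hx G' (fun W => ρ (insert g W) - 1) hax2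
        have he1 : ∀ Z ∈ G'.powerset, (x - 1) ^ (ρ G - ρ Z) * (-1 : ℝ) ^ (Z.card - ρ Z)
            = (x - 1) ^ (ρ G' - ρ Z) * (-1 : ℝ) ^ (Z.card - ρ Z) := by
          intro Z hZ; rw [hcol]
        have he2 : ∀ Z ∈ G'.powerset,
            (x - 1) ^ (ρ G - ρ (insert g Z)) * (-1 : ℝ) ^ ((insert g Z).card - ρ (insert g Z))
            = (x - 1) ^ ((fun W => ρ (insert g W) - 1) G' - (fun W => ρ (insert g W) - 1) Z)
              * (-1 : ℝ) ^ (Z.card - (fun W => ρ (insert g W) - 1) Z) := by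
          intro Z hZ
          rw [Finset.mem_powerset] at hZ
          have h2 : insert g Z ⊆ G := by rw [← hGi]; exact Finset.insert_subset_insert g hZ
          have h4 : 1 ≤ ρ (insert g Z) := by
            have hs : ({g} : Finset β) ⊆ insert g Z := by simp
            have := hρ.mono hs h2
            omega
          have h5 : (insert g Z).card = Z.card + 1 :=
            Finset.card_insert_of_notMem (fun h => hgG' (hZ h))
          have h6 : ρ (insert g Z) ≤ Z.card + 1 := by
            have := hρ.le_card h2; omega
          have h8 : ρ (insert g G') = ρ G := by rw [hGi]
          have h9 : ρ (insert g Z) ≤ ρ (insert g G') := by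
            apply hρ.mono (Finset.insert_subset_insert g hZ)
            rw [hGi]
          simp only []
          rw [h5, h8]
          congr 2
          · omega
          · omega
        rw [Finset.sum_congr rfl he1, Finset.sum_congr rfl he2]
        rw [← hcol]
        linarith
      · -- coloop case
        have hcol' : ρ G = ρ G' + 1 := by omega
        have hkey : ∀ Z : Finset β, Z ⊆ G' → ρ (insert g Z) = ρ Z + 1 := by
          intro Z hZ
          have h2 : insert g Z ⊆ G := by rw [← hGi]; exact Finset.insert_subset_insert g hZ
          have h1 := hρ.submod h2 hsub
          have h3 : insert g Z ∪ G' = G := by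
            rw [← hGi]
            ext y; simp only [Finset.mem_union, Finset.mem_insert]
            constructor
            · rintro (⟨rfl | hy⟩ | hy)
              · exact Or.inl rfl
              · exact Or.inr (hZ hy)
              · exact Or.inr hy
            · rintro (rfl | hy)
              · exact Or.inl (Or.inl rfl)
              · exact Or.inr hy
          have h4 : insert g Z ∩ G' = Z := by
            ext y; simp only [Finset.mem_inter, Finset.mem_insert]
            constructor
            · rintro ⟨rfl | hy, hyG'⟩
              · exact absurd hyG' hgG'
              · exact hy
            · intro hy; exact ⟨Or.inr hy, hZ hy⟩
          rw [h3, h4] at h1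
          have h5 := hρ.step (hZ.trans hsub) hg
          omega
        rw [hsplit]
        have hIH := ih G' hss ρ (hρ.subset_ax hsub) hll'
        have he1 : ∀ Z ∈ G'.powerset, (x - 1) ^ (ρ G - ρ Z) * (-1 : ℝ) ^ (Z.card - ρ Z)
            = (x - 1) * ((x - 1) ^ (ρ G' - ρ Z) * (-1 : ℝ) ^ (Z.card - ρ Z)) := by
          intro Z hZ
          rw [Finset.mem_powerset] at hZ
          have h6 : ρ Z ≤ ρ G' := hρ.mono hZ hsub
          have h7 : ρ G - ρ Z = (ρ G' - ρ Z) + 1 := by omega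
          rw [h7, pow_succ]
          ring
        have he2 : ∀ Z ∈ G'.powerset,
            (x - 1) ^ (ρ G - ρ (insert g Z)) * (-1 : ℝ) ^ ((insert g Z).card - ρ (insert g Z))
            = (x - 1) ^ (ρ G' - ρ Z) * (-1 : ℝ) ^ (Z.card - ρ Z) := by
          intro Z hZ
          rw [Finset.mem_powerset] at hZ
          have h4 := hkey Z hZ
          have h5 : (insert g Z).card = Z.card + 1 :=
            Finset.card_insert_of_notMem (fun h => hgG' (hZ h))
          congr 2
          · omega
          · rw [h4, h5]; omega
        rw [Finset.sum_congr rfl he1, Finset.sum_congr rfl he2, ← Finset.mul_sum]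
        have hS : x ^ ρ G' ≤ ∑ Z ∈ G'.powerset, (x - 1) ^ (ρ G' - ρ Z) * (-1 : ℝ) ^ (Z.card - ρ Z) := hIH
        have hpow : (0:ℝ) ≤ x ^ ρ G' := pow_nonneg hx1 _
        calc x ^ ρ G = x * x ^ ρ G' := by rw [hcol', pow_succ]; ring
          _ = (x - 1) * x ^ ρ G' + x ^ ρ G' := by ring
          _ ≤ (x - 1) * (∑ Z ∈ G'.powerset, (x - 1) ^ (ρ G' - ρ Z) * (-1 : ℝ) ^ (Z.card - ρ Z))
              + ∑ Z ∈ G'.powerset, (x - 1) ^ (ρ G' - ρ Z) * (-1 : ℝ) ^ (Z.card - ρ Z) := by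
            have := mul_le_mul_of_nonneg_left hS hx0
            linarith

end SignedGE

section Split

variable {γ : Type*} [DecidableEq γ]

lemma sum_powerset_union_disjoint {s t : Finset γ} (h : Disjoint s t) (f : Finset γ → ℝ) :
    ∑ A ∈ (s ∪ t).powerset, f A = ∑ X ∈ s.powerset, ∑ Z ∈ t.powerset, f (X ∪ Z) := by
  rw [← Finset.sum_product' s.powerset t.powerset (fun X Z => f (X ∪ Z))]
  refine Finset.sum_nbij' (s := (s ∪ t).powerset) (t := s.powerset ×ˢ t.powerset)
    (f := f) (g := fun p => f (p.1 ∪ p.2))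
    (fun A => (A ∩ s, A ∩ t)) (fun p => p.1 ∪ p.2) ?_ ?_ ?_ ?_ ?_
  · intro A hA
    rw [Finset.mem_powerset] at hA
    simp only [Finset.mem_product, Finset.mem_powerset]
    exact ⟨Finset.inter_subset_right, Finset.inter_subset_right⟩
  · intro p hp
    simp only [Finset.mem_product, Finset.mem_powerset] at hp
    rw [Finset.mem_powerset]
    exact Finset.union_subset (hp.1.trans Finset.subset_union_left)
      (hp.2.trans Finset.subset_union_right)
  · intro A hA
    rw [Finset.mem_powerset] at hA
    show A ∩ s ∪ A ∩ t = A
    rw [← Finset.inter_union_distrib_left]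
    exact Finset.inter_eq_left.mpr hA
  · intro p hp
    simp only [Finset.mem_product, Finset.mem_powerset] at hp
    have h1 : (p.1 ∪ p.2) ∩ s = p.1 := by
      rw [Finset.union_inter_distrib_right, Finset.inter_eq_left.mpr hp.1,
        (Finset.disjoint_iff_inter_eq_empty.mp ((h.symm.mono_left hp.2))), Finset.union_empty]
    have h2 : (p.1 ∪ p.2) ∩ t = p.2 := by
      rw [Finset.union_inter_distrib_right, Finset.inter_eq_left.mpr hp.2,
        (Finset.disjoint_iff_inter_eq_empty.mp ((h.mono_left hp.1))), Finset.empty_union]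
    ext <;> simp [h1, h2]
  · intro A hA
    rw [Finset.mem_powerset] at hA
    show f A = f (A ∩ s ∪ A ∩ t)
    rw [← Finset.inter_union_distrib_left, Finset.inter_eq_left.mpr hA]

end Split

section Assembly

variable [Fintype α] [DecidableEq α] {M : Matroid α}

lemma rho_ax (M : Matroid α) : RhoAx M.E.toFinite.toFinset (fun A : Finset α => M.rankSet ↑A) where
  empty := by simpa using rankSet_empty M
  mono := by
    intro A B hAB _
    exact rankSet_mono M (Finset.coe_subset.mpr hAB)
  step := by
    intro A g _ _
    show M.rankSet ↑(insert g A) ≤ M.rankSet ↑A + 1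
    rw [Finset.coe_insert]
    exact rankSet_insert_le M _ g
  submod := by
    intro A B hA hB
    have hE := Set.Finite.coe_toFinset M.E.toFinite
    have hA' : (↑A : Set α) ⊆ M.E := by rw [← hE]; exact Finset.coe_subset.mpr hA
    have hB' : (↑B : Set α) ⊆ M.E := by rw [← hE]; exact Finset.coe_subset.mpr hB
    show M.rankSet ↑(A ∪ B) + M.rankSet ↑(A ∩ B) ≤ M.rankSet ↑A + M.rankSet ↑B
    rw [Finset.coe_union, Finset.coe_inter]
    exact rankSet_submod M hA' hB'

theorem tutte_x0_ge (hsd : M = M✶) {x : ℝ} (hx : 1 ≤ x) :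
    x ^ (M.rankSet M.E) ≤ M.tutte x 0 := by
  classical
  set E0 := M.E.toFinite.toFinset with hE0def
  have hE0 : (↑E0 : Set α) = M.E := Set.Finite.coe_toFinset M.E.toFinite
  obtain ⟨B, hB⟩ := M.exists_isBase
  have hBc : M.IsBase (M.E \ B) := by
    have h1 : M✶.IsBase (M.E \ B) := by
      rw [Matroid.dual_isBase_iff Set.diff_subset]
      rwa [Set.diff_diff_cancel_left hB.subset_ground]
    rwa [← hsd] at h1
  have hll : ∀ g ∈ E0, (fun A : Finset α => M.rankSet ↑A) {g} = 1 := by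
    intro g hg
    have hgE : g ∈ M.E := by rw [← hE0]; exact_mod_cast hg
    have hind : M.Indep {g} := by
      by_cases hgB : g ∈ B
      · exact hB.indep.subset (Set.singleton_subset_iff.mpr hgB)
      · exact hBc.indep.subset (Set.singleton_subset_iff.mpr ⟨hgE, hgB⟩)
    show M.rankSet ↑({g} : Finset α) = 1
    rw [Finset.coe_singleton, hind.rankSet_eq, Set.ncard_singleton]
  have h := sum_x0_ge x hx E0 (fun A : Finset α => M.rankSet ↑A) (rho_ax M) hll
  simp only [hE0] at h
  have hterm : ∀ A ∈ E0.powerset,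
      (x - 1) ^ (M.rankSet M.E - M.rankSet ↑A) * (-1 : ℝ) ^ (A.card - M.rankSet ↑A)
      = (x - 1) ^ (M.rankSet M.E - M.rankSet ↑A) * ((0:ℝ) - 1) ^ (A.card - M.rankSet ↑A) := by
    intro A _; norm_num
  rw [Finset.sum_congr rfl hterm] at h
  exact h

theorem tutte_diag_le (hsd : M = M✶) {a : ℝ} (ha : 2 ≤ a) :
    M.tutte a a ≤ (2 * a) ^ (M.rankSet M.E) := by
  classical
  set c := a - 1 with hcdef
  have hc : 1 ≤ c := by simp [hcdef]; linarith
  have hc0 : (0:ℝ) < c := by linarith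
  set E0 := M.E.toFinite.toFinset with hE0def
  have hE0 : (↑E0 : Set α) = M.E := Set.Finite.coe_toFinset M.E.toFinite
  set r := M.rankSet M.E with hrdef
  obtain ⟨B, hB⟩ := M.exists_isBase
  have hBc : M.IsBase (M.E \ B) := by
    have h1 : M✶.IsBase (M.E \ B) := by
      rw [Matroid.dual_isBase_iff Set.diff_subset]
      rwa [Set.diff_diff_cancel_left hB.subset_ground]
    rwa [← hsd] at h1
  set B0 := B.toFinite.toFinset with hB0def
  have hB0 : (↑B0 : Set α) = B := Set.Finite.coe_toFinset _
  set B1 := E0 \ B0 with hB1def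
  have hB1 : (↑B1 : Set α) = M.E \ B := by
    rw [hB1def, Finset.coe_sdiff, hE0, hB0]
  have hB0sub : B0 ⊆ E0 := by
    rw [← Finset.coe_subset, hB0, hE0]; exact hB.subset_ground
  have hunion : B0 ∪ B1 = E0 := Finset.union_sdiff_of_subset hB0sub
  have hdisj : Disjoint B0 B1 := Finset.disjoint_sdiff
  have hrE : M.rankSet M.E = r := rfl
  have hrB : (B : Set α).ncard = r := by
    rw [hrdef, rankSet_eq_of_basis M hB.isBasis_ground]
  have hrBc : (M.E \ B).ncard = r := by
    rw [hrdef, rankSet_eq_of_basis M hBc.isBasis_ground]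
  have hcard0 : B0.card = r := by rw [← Set.ncard_coe_finset, hB0, hrB]
  have hcard1 : B1.card = r := by rw [← Set.ncard_coe_finset, hB1, hrBc]
  -- rewrite the tutte sum
  have htutte : M.tutte a a = ∑ A ∈ E0.powerset,
      c ^ ((r - M.rankSet ↑A) + (A.card - M.rankSet ↑A)) := by
    unfold Matroid.tutte
    refine Finset.sum_congr rfl ?_
    intro A _
    rw [pow_add]
  rw [htutte, ← hunion, sum_powerset_union_disjoint hdisj]
  have hinner : ∀ X ∈ B0.powerset,
      (∑ Z ∈ B1.powerset, c ^ ((r - M.rankSet ↑(X ∪ Z)) + ((X ∪ Z).card - M.rankSet ↑(X ∪ Z))))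
      ≤ a ^ r := by
    intro X hX
    rw [Finset.mem_powerset] at hX
    have hXB : (↑X : Set α) ⊆ B := by rw [← hB0]; exact Finset.coe_subset.mpr hX
    have hXE : (↑X : Set α) ⊆ M.E := hXB.trans hB.subset_ground
    have hXind : M.Indep ↑X := hB.indep.subset hXB
    have hXrank : M.rankSet ↑X = X.card := by rw [hXind.rankSet_eq, Set.ncard_coe_finset]
    set ρX : Finset α → ℕ := fun W => M.rankSet (↑X ∪ ↑W) - X.card with hρXdef
    have hsubE : ∀ W : Finset α, W ⊆ B1 → (↑X ∪ ↑W : Set α) ⊆ M.E := by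
      intro W hW
      refine Set.union_subset hXE ?_
      have : (↑W : Set α) ⊆ M.E \ B := by rw [← hB1]; exact Finset.coe_subset.mpr hW
      exact this.trans Set.diff_subset
    have hXle : ∀ W : Finset α, X.card ≤ M.rankSet (↑X ∪ ↑W) := by
      intro W
      rw [← hXrank]
      exact rankSet_mono M Set.subset_union_left
    have hAxX : RhoAx B1 ρX := by
      constructor
      · show M.rankSet (↑X ∪ ↑(∅ : Finset α)) - X.card = 0
        rw [Finset.coe_empty, Set.union_empty, hXrank]
        omega
      · intro A' B' hAB _
        show M.rankSet (↑X ∪ ↑A') - X.card ≤ M.rankSet (↑X ∪ ↑B') - X.card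
        have := rankSet_mono M (Set.union_subset_union_right (↑X : Set α)
          (Finset.coe_subset.mpr hAB))
        omega
      · intro A' g _ _
        show M.rankSet (↑X ∪ ↑(insert g A')) - X.card ≤ (M.rankSet (↑X ∪ ↑A') - X.card) + 1
        rw [Finset.coe_insert, Set.union_insert]
        have h1 := rankSet_insert_le M ((↑X : Set α) ∪ ↑A') g
        have h2 := hXle A'
        omega
      · intro A' B' hA' hB'
        show M.rankSet (↑X ∪ ↑(A' ∪ B')) - X.card + (M.rankSet (↑X ∪ ↑(A' ∩ B')) - X.card)
          ≤ (M.rankSet (↑X ∪ ↑A') - X.card) + (M.rankSet (↑X ∪ ↑B') - X.card)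
        have hu : (↑X ∪ ↑(A' ∪ B') : Set α) = (↑X ∪ ↑A') ∪ (↑X ∪ ↑B') := by
          rw [Finset.coe_union, Set.union_union_union_comm, Set.union_self]
        have hi : (↑X ∪ ↑(A' ∩ B') : Set α) = (↑X ∪ ↑A') ∩ (↑X ∪ ↑B') := by
          rw [Finset.coe_inter, Set.union_inter_distrib_left]
        have hsm := rankSet_submod M (hsubE A' hA') (hsubE B' hB')
        rw [hu, hi]
        have := hXle A'
        have := hXle B'
        have h3 : X.card ≤ M.rankSet ((↑X ∪ ↑A') ∪ (↑X ∪ ↑B')) := by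
          refine le_trans (hXle A') (rankSet_mono M ?_)
          exact Set.subset_union_left
        have h4 : X.card ≤ M.rankSet ((↑X ∪ ↑A') ∩ (↑X ∪ ↑B')) := by
          rw [← hi]
          exact hXle _
        omega
    have hρXB1 : ρX B1 = r - X.card := by
      show M.rankSet (↑X ∪ ↑B1) - X.card = r - X.card
      have hle : M.rankSet (↑X ∪ ↑B1) ≤ r := by
        rw [hrdef]
        exact rankSet_mono M (by rw [hB1]; exact Set.union_subset hXE Set.diff_subset)
      have hge : r ≤ M.rankSet (↑X ∪ ↑B1) := by
        have h5 : M.rankSet ↑B1 = r := by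
          rw [hB1, hBc.indep.rankSet_eq, hrBc]
        rw [← h5]
        exact rankSet_mono M Set.subset_union_right
      omega
    have hmain := sum_pow_diag_le c hc B1 ρX hAxX
    rw [hρXB1] at hmain
    have hterm : ∀ Z ∈ B1.powerset,
        c ^ ((r - M.rankSet ↑(X ∪ Z)) + ((X ∪ Z).card - M.rankSet ↑(X ∪ Z)))
        = c ^ (((r - X.card) - ρX Z) + (Z.card - ρX Z)) := by
      intro Z hZ
      rw [Finset.mem_powerset] at hZ
      have hcoe : (↑(X ∪ Z) : Set α) = ↑X ∪ ↑Z := Finset.coe_union X Z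
      have hdXZ : Disjoint X Z := hdisj.mono hX hZ
      have hcardu : (X ∪ Z).card = X.card + Z.card := Finset.card_union_of_disjoint hdXZ
      have h6 : M.rankSet (↑X ∪ ↑Z) ≤ r := by
        rw [hrdef]; exact rankSet_mono M (hsubE Z hZ)
      have h7 := hXle Z
      have h8 : M.rankSet (↑X ∪ ↑Z) ≤ X.card + Z.card := by
        refine le_trans (rankSet_le_ncard M _) ?_
        refine le_trans (Set.ncard_union_le _ _) ?_
        simp
      have h9 : ρX Z = M.rankSet (↑X ∪ ↑Z) - X.card := rfl
      rw [hcoe, hcardu]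
      congr 1
      omega
    rw [Finset.sum_congr rfl hterm]
    calc _ ≤ (1 + c) ^ B1.card := hmain
      _ = a ^ r := by rw [hcard1]; congr 1; rw [hcdef]; ring
  calc ∑ X ∈ B0.powerset, ∑ Z ∈ B1.powerset,
        c ^ ((r - M.rankSet ↑(X ∪ Z)) + ((X ∪ Z).card - M.rankSet ↑(X ∪ Z)))
      ≤ ∑ X ∈ B0.powerset, a ^ r := Finset.sum_le_sum hinner
    _ = (2 : ℝ) ^ r * a ^ r := by
        rw [Finset.sum_const, Finset.card_powerset, hcard0, nsmul_eq_mul]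
        norm_num
    _ = (2 * a) ^ r := by rw [mul_pow]

end Assembly


/-- If `M` is an identically self-dual matroid on a finite ground set, then
`max{T_M(2a,0), T_M(0,2a)} ≥ T_M(a,a)` for every real `a ≥ 2`. -/
theorem tutte_diag_le_max_of_self_dual [Fintype α] (M : Matroid α)
    (hsd : M = M✶) :
    ∀ a : ℝ, 2 ≤ a → M.tutte a a ≤ max (M.tutte (2 * a) 0) (M.tutte 0 (2 * a)) := by
  classical
  intro a ha
  have h1 : M.tutte a a ≤ (2 * a) ^ (M.rankSet M.E) := tutte_diag_le hsd ha
  have h2 : (2 * a) ^ (M.rankSet M.E) ≤ M.tutte (2 * a) 0 := tutte_x0_ge hsd (by linarith)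
  exact le_trans (h1.trans h2) (le_max_left _ _)
end

section
/- Let M be a matroid on a finite ground set and let e be an element of M that is neither a loop nor a coloop. If both T_{M\e} (the Tutte polynomial of the deletion of e) and T_{M/e} (the Tutte polynomial of the contraction of e) are convex along the portions of the lines x+y=p lying in the positive quadrant, then T_M is convex along the portions of the lines x+y=p lying in the positive quadrant. -/
open Matroid Set

variable {α : Type*}

/-- `T_M` is convex along the portions of the lines `x + y = p` lying in the
positive quadrant. -/
def Matroid.TutteConvexOnLines [Fintype α] (M : Matroid α) : Prop :=
  ∀ t x₁ y₁ x₂ y₂ : ℝ, 0 ≤ t → t ≤ 1 → 0 ≤ x₁ → 0 ≤ y₁ → 0 ≤ x₂ → 0 ≤ y₂ →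
    x₁ + y₁ = x₂ + y₂ →
    M.tutte (t * x₁ + (1 - t) * x₂) (t * y₁ + (1 - t) * y₂) ≤
      t * M.tutte x₁ y₁ + (1 - t) * M.tutte x₂ y₂

/-- The deletion `M \ e` of an element from a matroid. -/
noncomputable def Matroid.delElem (M : Matroid α) (e : α) : Matroid α :=
  M ↾ (M.E \ {e})

/-- The contraction `M / e` of an element from a matroid, defined by duality:
`M / e = (M✶ \ e)✶`. -/
noncomputable def Matroid.conElem (M : Matroid α) (e : α) : Matroid α :=
  (M✶ ↾ (M.E \ {e}))✶

section Aux

variable [Fintype α] {M : Matroid α} {I X : Set α} {e : α}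

lemma rankSet_eq_of_basis' (hI : M.IsBasis' I X) : M.rankSet X = I.ncard := by
  apply le_antisymm
  · refine csSup_le ⟨0, ∅, empty_subset _, M.empty_indep, by simp⟩ ?_
    rintro n ⟨J, hJX, hJ, rfl⟩
    by_contra hcon
    push_neg at hcon
    have hlt : I.encard < J.encard := by
      rw [← I.toFinite.cast_ncard_eq, ← J.toFinite.cast_ncard_eq]
      exact_mod_cast hcon
    obtain ⟨f, hf, hfi⟩ := hI.indep.augment hJ hlt
    exact hI.insert_not_indep ⟨hJX hf.1, hf.2⟩ hfi
  · apply le_csSup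
    · refine ⟨Fintype.card α, ?_⟩
      rintro n ⟨J, _, _, rfl⟩
      simpa [Set.ncard_univ] using Set.ncard_le_ncard (Set.subset_univ J) Set.finite_univ
    · exact ⟨I, hI.subset, hI.indep, rfl⟩

lemma base_basis' {B : Set α} (hB : M.IsBase B) (hBX : B ⊆ X) : M.IsBasis' B X :=
  ⟨⟨hB.indep, hBX⟩, fun J hJ hBJ => (hB.eq_of_subset_indep hJ.1 hBJ) ▸ le_refl _⟩

lemma rankSet_restrict {R : Set α} (hXR : X ⊆ R) : (M ↾ R).rankSet X = M.rankSet X := by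
  unfold Matroid.rankSet
  congr 1
  ext n
  constructor
  · rintro ⟨I, hIX, hI, rfl⟩
    exact ⟨I, hIX, hI.1, rfl⟩
  · rintro ⟨I, hIX, hI, rfl⟩
    exact ⟨I, hIX, ⟨hI, hIX.trans hXR⟩, rfl⟩

lemma indep_singleton_of_rankSet_ne (he : e ∈ M.E) (hloop : M.rankSet {e} ≠ 0) :
    M.Indep {e} := by
  by_contra hind
  apply hloop
  have hset : {n | ∃ I ⊆ ({e} : Set α), M.Indep I ∧ I.ncard = n} = {0} := by
    ext n
    simp only [Set.mem_setOf_eq, Set.mem_singleton_iff]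
    constructor
    · rintro ⟨I, hIe, hI, rfl⟩
      rcases Set.subset_singleton_iff_eq.mp hIe with rfl | rfl
      · simp
      · exact absurd hI hind
    · rintro rfl
      exact ⟨∅, empty_subset _, M.empty_indep, by simp⟩
  rw [Matroid.rankSet, hset, csSup_singleton]

lemma conElem_indep_iff (heI : M.Indep {e}) :
    (M.conElem e).Indep I ↔ I ⊆ M.E \ {e} ∧ M.Indep (insert e I) := by
  rw [Matroid.conElem, Matroid.dual_indep_iff_exists']
  simp only [Matroid.restrict_ground_eq, Matroid.dual_ground]
  constructor
  · rintro ⟨hIE, B, hB, hdisj⟩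
    refine ⟨hIE, ?_⟩
    rw [Matroid.isBase_restrict_iff'] at hB
    -- produce a dual base avoiding `e`
    obtain ⟨B₁, hB₁, heB₁⟩ := heI.exists_isBase_superset
    have heB₁' : e ∈ B₁ := heB₁ rfl
    have hB₁' : M✶.IsBase (M.E \ B₁) := hB₁.compl_isBase_dual
    have hB₁'sub : M.E \ B₁ ⊆ M.E \ {e} := diff_subset_diff_right (by simpa using heB₁')
    have hbasis : M✶.IsBasis' (M.E \ B₁) (M.E \ {e}) := base_basis' hB₁' hB₁'sub
    -- `B` has the cardinality of a dual base, hence is a dual base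
    obtain ⟨B₂, hB₂, hBB₂⟩ := hB.indep.exists_isBase_superset
    have hcard : B₂.encard = B.encard := by
      rw [hB₂.encard_eq_encard_of_isBase hB₁', hbasis.encard_eq_encard hB]
    have hBB₂' : B = B₂ := B.toFinite.eq_of_subset_of_encard_le hBB₂ hcard.le
    have hBbase : M✶.IsBase B := hBB₂' ▸ hB₂
    have hEB : M.IsBase (M.E \ B) := hBbase.compl_isBase_of_dual
    apply hEB.indep.subset
    rw [insert_subset_iff]
    refine ⟨⟨heI.subset_ground rfl, fun h => (hB.subset h).2 rfl⟩, ?_⟩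
    intro x hx
    exact ⟨(hIE hx).1, fun hxB => hdisj.ne_of_mem hx hxB rfl⟩
  · rintro ⟨hIE, hind⟩
    obtain ⟨B₁, hB₁, heB₁⟩ := hind.exists_isBase_superset
    have heB₁' : e ∈ B₁ := heB₁ (mem_insert _ _)
    have hB₁' : M✶.IsBase (M.E \ B₁) := hB₁.compl_isBase_dual
    have hB₁'sub : M.E \ B₁ ⊆ M.E \ {e} := diff_subset_diff_right (by simpa using heB₁')
    refine ⟨hIE, M.E \ B₁, ?_, ?_⟩
    · rw [Matroid.isBase_restrict_iff']
      exact base_basis' hB₁' hB₁'sub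
    · exact Set.disjoint_left.mpr fun x hxI hxB => hxB.2 (heB₁ (mem_insert_of_mem _ hxI))

lemma conElem_rankSet (heI : M.Indep {e}) {A : Set α} (hA : A ⊆ M.E \ {e}) :
    M.rankSet (insert e A) = (M.conElem e).rankSet A + 1 := by
  obtain ⟨I, hI⟩ := (M.conElem e).exists_isBasis' A
  have hIA : I ⊆ A := hI.subset
  have hIi := hI.indep
  rw [conElem_indep_iff heI] at hIi
  obtain ⟨hIE, hins⟩ := hIi
  have heA : e ∉ A := fun h => (hA h).2 rfl
  have heI' : e ∉ I := fun h => heA (hIA h)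
  have hbasis : M.IsBasis' (insert e I) (insert e A) := by
    refine ⟨⟨hins, insert_subset_insert hIA⟩, ?_⟩
    rintro J ⟨hJind, hJA⟩ hsub
    have heJ : e ∈ J := hsub (mem_insert _ _)
    have hJeA : J \ {e} ⊆ A := by
      rintro x ⟨hxJ, hxe⟩
      rcases hJA hxJ with h | h
      · exact absurd h hxe
      · exact h
    have hJe : (M.conElem e).Indep (J \ {e}) := by
      rw [conElem_indep_iff heI]
      refine ⟨hJeA.trans hA, ?_⟩
      rwa [Set.insert_diff_singleton, Set.insert_eq_of_mem heJ]
    have hIJ : I ⊆ J \ {e} := fun x hx =>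
      ⟨hsub (mem_insert_of_mem _ hx), fun hxe => heI' (hxe ▸ hx)⟩
    have hmax : J \ {e} ⊆ I := hI.2 ⟨hJe, hJeA⟩ hIJ
    intro x hxJ
    rcases eq_or_ne x e with rfl | hxe
    · exact mem_insert _ _
    · exact mem_insert_of_mem _ (hmax ⟨hxJ, hxe⟩)
  rw [rankSet_eq_of_basis' hbasis, rankSet_eq_of_basis' hI,
    Set.ncard_insert_of_notMem heI' I.toFinite]

/-- Rewrite the Tutte polynomial as a sum over the powerset of any finset
whose coercion is the ground set. -/
lemma tutte_eq_sum (M : Matroid α) (F : Finset α) (hF : (↑F : Set α) = M.E) (x y : ℝ) :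
    M.tutte x y = ∑ A ∈ F.powerset,
      (x - 1) ^ (M.rankSet M.E - M.rankSet ↑A) * (y - 1) ^ (A.card - M.rankSet ↑A) := by
  have hFe : M.E.toFinite.toFinset = F :=
    Finset.coe_injective (by rw [Set.Finite.coe_toFinset, hF])
  unfold Matroid.tutte
  rw [hFe]

/-- The deletion–contraction identity for the Tutte polynomial. -/
lemma tutte_del_con (M : Matroid α) (e : α) (he : e ∈ M.E)
    (hloop : M.rankSet {e} ≠ 0)
    (hcoloop : ¬ (∀ B, M.IsBase B → e ∈ B)) (x y : ℝ) :
    M.tutte x y = (M.delElem e).tutte x y + (M.conElem e).tutte x y := by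
  classical
  have heI : M.Indep {e} := indep_singleton_of_rankSet_ne he hloop
  push_neg at hcoloop
  obtain ⟨B₀, hB₀, heB₀⟩ := hcoloop
  have hB₀sub : B₀ ⊆ M.E \ {e} := fun z hz =>
    ⟨hB₀.indep.subset_ground hz, fun hze => heB₀ (hze ▸ hz)⟩
  -- ranks of the ground sets
  have hgroundD : M.rankSet (M.E \ {e}) = M.rankSet M.E := by
    rw [rankSet_eq_of_basis' (base_basis' hB₀ hB₀sub),
      rankSet_eq_of_basis' (base_basis' hB₀ hB₀.subset_ground)]
  have hinsE : insert e (M.E \ {e}) = M.E := by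
    rw [Set.insert_diff_singleton, Set.insert_eq_of_mem he]
  have hgroundC : M.rankSet M.E = (M.conElem e).rankSet (M.E \ {e}) + 1 := by
    have h := conElem_rankSet heI (Set.Subset.rfl : M.E \ {e} ⊆ M.E \ {e})
    rwa [hinsE] at h
  -- ground finsets
  set E' : Finset α := (M.E \ {e}).toFinite.toFinset with hE'def
  have hE'coe : (↑E' : Set α) = M.E \ {e} := Set.Finite.coe_toFinset _
  have hDground : (M.delElem e).E = M.E \ {e} := rfl
  have hCground : (M.conElem e).E = M.E \ {e} := rfl
  have heE' : e ∉ E' := by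
    simp only [hE'def, Set.Finite.mem_toFinset]
    simp
  have hMt := tutte_eq_sum M (insert e E')
    (by rw [Finset.coe_insert, hE'coe, hinsE]) x y
  have hDt := tutte_eq_sum (M.delElem e) E' (by rw [hE'coe, hDground]) x y
  have hCt := tutte_eq_sum (M.conElem e) E' (by rw [hE'coe, hCground]) x y
  rw [hMt, hDt, hCt, Finset.sum_powerset_insert heE']
  congr 1
  · -- deletion part
    apply Finset.sum_congr rfl
    intro A hA
    have hAsub : (↑A : Set α) ⊆ M.E \ {e} := by
      rw [← hE'coe]
      exact_mod_cast Finset.mem_powerset.mp hA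
    have h1 : (M.delElem e).rankSet (M.delElem e).E = M.rankSet M.E := by
      rw [hDground, Matroid.delElem, rankSet_restrict Set.Subset.rfl, hgroundD]
    have h2 : (M.delElem e).rankSet ↑A = M.rankSet ↑A := by
      rw [Matroid.delElem, rankSet_restrict hAsub]
    rw [h1, h2]
  · -- contraction part
    apply Finset.sum_congr rfl
    intro A hA
    have hAsub : (↑A : Set α) ⊆ M.E \ {e} := by
      rw [← hE'coe]
      exact_mod_cast Finset.mem_powerset.mp hA
    have heA : e ∉ A := fun h => (hAsub h).2 rfl
    have hcard : (insert e A).card = A.card + 1 := Finset.card_insert_of_notMem heA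
    have hrank : M.rankSet ↑(insert e A) = (M.conElem e).rankSet ↑A + 1 := by
      rw [Finset.coe_insert]
      exact conElem_rankSet heI hAsub
    rw [hrank, hcard, hgroundC, hCground, Nat.add_sub_add_right, Nat.add_sub_add_right]

end Aux

/-- If `e` is neither a loop nor a coloop of `M` and the Tutte polynomials of `M \ e` and
`M / e` are both convex along the portions of the lines `x + y = p` in the positive
quadrant, then so is the Tutte polynomial of `M`. -/
theorem tutteConvexOnLines_of_delete_contract [Fintype α] (M : Matroid α) (e : α)
    (he : e ∈ M.E)
    (hloop : M.rankSet {e} ≠ 0)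
    (hcoloop : ¬ (∀ B, M.IsBase B → e ∈ B))
    (hdel : (M.delElem e).TutteConvexOnLines)
    (hcon : (M.conElem e).TutteConvexOnLines) :
    M.TutteConvexOnLines := by
  intro t x₁ y₁ x₂ y₂ ht ht1 hx₁ hy₁ hx₂ hy₂ hsum
  have hid := tutte_del_con M e he hloop hcoloop
  rw [hid, hid, hid]
  have h1 := hdel t x₁ y₁ x₂ y₂ ht ht1 hx₁ hy₁ hx₂ hy₂ hsum
  have h2 := hcon t x₁ y₁ x₂ y₂ ht ht1 hx₁ hy₁ hx₂ hy₂ hsum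
  nlinarith [h1, h2]
end
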